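/- Lemma 2.2, last part (the vertex weight is the algebraic area of the dual face, vertex-star form). Let (m, p_0, p) be a spherical vertex star with vertex weight d_0. For each j ∈ ZMod m let n_j ∈ ℝ³ be the unique vector with ⟨n_j, p_0⟩ = ⟨n_j, p_j⟩ = ⟨n_j, p_{j+1}⟩ = 1 (the dual vertex of the triangle (p_0, p_j, p_{j+1})). Then the algebraic area of the dual polygon (n_j)_{j∈ZMod m}, namely (1/2)·∑_{j∈ZMod m} det(p_0, n_{j−1}, n_j), equals d_0. -/

import Mathlib

noncomputable section

/-- Standard inner product on `ℝ³`. -/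
def dot3 (x y : Fin 3 → ℝ) : ℝ := x 0 * y 0 + x 1 * y 1 + x 2 * y 2

/-- Euclidean norm on `ℝ³`. -/
def norm3 (x : Fin 3 → ℝ) : ℝ := Real.sqrt (dot3 x x)

/-- Cross product on `ℝ³`. -/
def cross3 (x y : Fin 3 → ℝ) : Fin 3 → ℝ :=
  ![x 1 * y 2 - x 2 * y 1, x 2 * y 0 - x 0 * y 2, x 0 * y 1 - x 1 * y 0]

/-- Determinant of three vectors in `ℝ³`. -/
def det3 (x y z : Fin 3 → ℝ) : ℝ := dot3 (cross3 x y) z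

/-- Spherical angle at `a` between `b` and `c` (all unit vectors). -/
def sphAngle (a b c : Fin 3 → ℝ) : ℝ :=
  Real.arccos (dot3 (b - dot3 a b • a) (c - dot3 a c • a) /
    (norm3 (b - dot3 a b • a) * norm3 (c - dot3 a c • a)))

/-- Edge weight `c_j` of the edge `(p₀, p_j)` of a spherical vertex star. -/
def sphStarWeight (m : ℕ) (p0 : Fin 3 → ℝ) (p : ZMod m → Fin 3 → ℝ) (j : ZMod m) : ℝ :=
  (Real.tan ((sphAngle p0 (p j) (p (j+1)) + sphAngle (p j) (p (j+1)) p0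
      - sphAngle (p (j+1)) p0 (p j)) / 2)
   + Real.tan ((sphAngle p0 (p (j-1)) (p j) + sphAngle (p j) p0 (p (j-1))
      - sphAngle (p (j-1)) (p j) p0) / 2))
  / (2 * Real.cos (Real.arccos (dot3 p0 (p j)) / 2) ^ 2)

/-- Vertex weight `d₀` of a spherical vertex star. -/
def sphStarVertexWeight (m : ℕ) [NeZero m] (p0 : Fin 3 → ℝ) (p : ZMod m → Fin 3 → ℝ) : ℝ :=
  ∑ j : ZMod m, sphStarWeight m p0 p j * Real.sin (Real.arccos (dot3 p0 (p j)) / 2) ^ 2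

lemma dot3_self_nonneg (x : Fin 3 → ℝ) : 0 ≤ dot3 x x := by
  have : dot3 x x = x 0 ^ 2 + x 1 ^ 2 + x 2 ^ 2 := by simp [dot3]; ring
  rw [this]; positivity

lemma unit_dot {x : Fin 3 → ℝ} (h : norm3 x = 1) : dot3 x x = 1 := by
  have h2 : Real.sqrt (dot3 x x) = 1 := h
  have := Real.sq_sqrt (dot3_self_nonneg x)
  rw [h2] at this; linarith [this]

lemma dot3_comm (x y : Fin 3 → ℝ) : dot3 x y = dot3 y x := by simp [dot3]; ring

lemma dot3_smul_left (s : ℝ) (x y : Fin 3 → ℝ) : dot3 (s • x) y = s * dot3 x y := by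
  simp [dot3]; ring

lemma det3_cramer (a b c z : Fin 3 → ℝ) (i : Fin 3) :
    det3 a b c * z i = dot3 z a * cross3 b c i + dot3 z b * cross3 c a i + dot3 z c * cross3 a b i := by
  fin_cases i <;> simp [det3, dot3, cross3] <;> ring

lemma det3_smul₂ (a x y : Fin 3 → ℝ) (s : ℝ) : det3 a (s • x) y = s * det3 a x y := by
  simp [det3, dot3, cross3]; ring

lemma det3_smul₃ (a x y : Fin 3 → ℝ) (s : ℝ) : det3 a x (s • y) = s * det3 a x y := by
  simp [det3, dot3, cross3]; ring

lemma dotN_a (a b c : Fin 3 → ℝ) :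
    dot3 (cross3 b c + cross3 c a + cross3 a b) a = det3 a b c := by
  simp [det3, dot3, cross3]; ring

lemma dotN_b (a b c : Fin 3 → ℝ) :
    dot3 (cross3 b c + cross3 c a + cross3 a b) b = det3 a b c := by
  simp [det3, dot3, cross3]; ring

lemma dotN_c (a b c : Fin 3 → ℝ) :
    dot3 (cross3 b c + cross3 c a + cross3 a b) c = det3 a b c := by
  simp [det3, dot3, cross3]; ring

lemma proj_self (a b : Fin 3 → ℝ) (u : ℝ) (ha : dot3 a a = 1) (hu : dot3 a b = u) :
    dot3 (b - u • a) (b - u • a) = dot3 b b - u ^ 2 := by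
  simp only [dot3, Pi.sub_apply, Pi.smul_apply, smul_eq_mul] at *
  linear_combination u ^ 2 * ha - 2 * u * hu

lemma proj_dot (a b c : Fin 3 → ℝ) (u v : ℝ) (ha : dot3 a a = 1)
    (hu : dot3 a b = u) (hv : dot3 a c = v) :
    dot3 (b - u • a) (c - v • a) = dot3 b c - u * v := by
  simp only [dot3, Pi.sub_apply, Pi.smul_apply, smul_eq_mul] at *
  linear_combination u * v * ha - v * hu - u * hv

lemma det3_sq (a b c : Fin 3 → ℝ) (ha : dot3 a a = 1) (hb : dot3 b b = 1) (hc : dot3 c c = 1) :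
    det3 a b c ^ 2 = 1 - dot3 a b ^ 2 - dot3 a c ^ 2 - dot3 b c ^ 2
      + 2 * dot3 a b * dot3 a c * dot3 b c := by
  simp only [det3, dot3, cross3, Matrix.cons_val_zero, Matrix.cons_val_one, Matrix.head_cons,
    Matrix.cons_val_two, Matrix.tail_cons] at *
  linear_combination (1*(b 2)^2*(c 1)^2 + (-2)*(b 1)*(b 2)*(c 1)*(c 2) + 1*(b 1)^2*(c 2)^2 + (-2)*(b 0)*(b 2)*(c 0)*(c 2) + (-2)*(b 0)*(b 1)*(c 0)*(c 1) + (-2)*(b 0)^2*(c 0)^2 + 1*(c 0)^2 + 1*(b 0)^2) * ha + (1*(a 2)^2*(c 1)^2 + 2*(a 2)^2*(c 0)^2 + (-2)*(a 1)*(a 2)*(c 1)*(c 2) + 1*(a 1)^2*(c 2)^2 + 2*(a 1)^2*(c 0)^2 + (-2)*(a 0)*(a 2)*(c 0)*(c 2) + (-2)*(a 0)*(a 1)*(c 0)*(c 1) + (-1)*(c 0)^2 + (-1)*(a 2)^2 + (-1)*(a 1)^2 + 1) * hb + ((-2)*(a 2)^2*(b 2)^2 + (-1)*(a 2)^2*(b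 1)^2 + (-2)*(a 1)*(a 2)*(b 1)*(b 2) + (-1)*(a 1)^2*(b 2)^2 + (-2)*(a 1)^2*(b 1)^2 + (-2)*(a 0)*(a 2)*(b 0)*(b 2) + (-2)*(a 0)*(a 1)*(b 0)*(b 1) + 1*(b 2)^2 + 1*(b 1)^2 + 1*(a 2)^2 + 1*(a 1)^2) * hc

lemma key_det (a e b c : Fin 3 → ℝ) (ha : dot3 a a = 1) (he : dot3 e e = 1)
    (hb : dot3 b b = 1) (hc : dot3 c c = 1) :
    det3 a (cross3 e b + cross3 b a + cross3 a e) (cross3 b c + cross3 c a + cross3 a b)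
        * (1 + dot3 a b)
      = (1 - dot3 a b) * ((1 + dot3 a b - dot3 a c - dot3 b c) * det3 a e b
        + (1 + dot3 a b - dot3 a e - dot3 e b) * det3 a b c) := by
  simp only [det3, dot3, cross3, Pi.add_apply, Matrix.cons_val_zero, Matrix.cons_val_one,
    Matrix.head_cons, Matrix.cons_val_two, Matrix.tail_cons] at *
  linear_combination (1*(e 2)*(b 0)*(b 2)^2*(c 1) + 1*(e 2)*(b 0)*(b 1)^2*(c 1) + 1*(e 2)*(b 0)^3*(c 1) + (-1)*(e 1)*(b 0)*(b 2)^2*(c 2) + (-1)*(e 1)*(b 0)*(b 1)^2*(c 2) + (-1)*(e 1)*(b 0)^3*(c 2) + 2*(a 2)*(e 2)*(b 1)*(b 2)*(c 0) + (-2)*(a 2)*(e 2)*(b 0)*(b 2)*(c 1) + (-2)*(a 2)*(e 1)*(b 2)^2*(c 0) + 2*(a 2)*(e 1)*(b 0)*(b 2)*(c 2) + 2*(a 2)*(e 0)*(b 2)^2*(c 1) + (-2)*(a 2)*(e 0)*(b 1)*(b 2)*(c 2) + (-1)*(a 2)^2*(b 1)*(b 2)*(c 0) + 1*(a 2)^2*(b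 0)*(b 2)*(c 1) + 1*(a 2)^2*(e 1)*(b 2)*(c 0) + (-1)*(a 2)^2*(e 1)*(b 0)*(b 2) + (-1)*(a 2)^2*(e 0)*(b 2)*(c 1) + 1*(a 2)^2*(e 0)*(b 1)*(b 2) + 2*(a 1)*(e 2)*(b 1)^2*(c 0) + (-2)*(a 1)*(e 2)*(b 0)*(b 1)*(c 1) + (-2)*(a 1)*(e 1)*(b 1)*(b 2)*(c 0) + 2*(a 1)*(e 1)*(b 0)*(b 1)*(c 2) + 2*(a 1)*(e 0)*(b 1)*(b 2)*(c 1) + (-2)*(a 1)*(e 0)*(b 1)^2*(c 2) + 1*(a 1)*(a 2)*(b 2)^2*(c 0) + (-1)*(a 1)*(a 2)*(b 1)^2*(c 0) + (-1)*(a 1)*(a 2)*(b 0)*(b 2)*(c 2) + 1*(a 1)*(a 2)*(b 0)*(b 1)*(c 1) + (-1)*(a 1)*(a 2)*(e 2)*(b 2)*(c 0) + 1*(a 1)*(a 2)*(e 2)*(b 0)*(b 2) + 1*(a 1)*(a 2)*(e 1)*(b 1)*(c 0) + (-1)*(a 1)*(a 2)*(e 1)*(b 0)*(b 1) + 1*(a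 1)*(a 2)*(e 0)*(b 2)*(c 2) + (-1)*(a 1)*(a 2)*(e 0)*(b 2)^2 + (-1)*(a 1)*(a 2)*(e 0)*(b 1)*(c 1) + 1*(a 1)*(a 2)*(e 0)*(b 1)^2 + 1*(a 1)^2*(b 1)*(b 2)*(c 0) + (-1)*(a 1)^2*(b 0)*(b 1)*(c 2) + (-1)*(a 1)^2*(e 2)*(b 1)*(c 0) + 1*(a 1)^2*(e 2)*(b 0)*(b 1) + 1*(a 1)^2*(e 0)*(b 1)*(c 2) + (-1)*(a 1)^2*(e 0)*(b 1)*(b 2) + 2*(a 0)*(e 2)*(b 0)*(b 1)*(c 0) + (-2)*(a 0)*(e 2)*(b 0)^2*(c 1) + (-2)*(a 0)*(e 1)*(b 0)*(b 2)*(c 0) + 2*(a 0)*(e 1)*(b 0)^2*(c 2) + 2*(a 0)*(e 0)*(b 0)*(b 2)*(c 1) + (-2)*(a 0)*(e 0)*(b 0)*(b 1)*(c 2) + (-1)*(a 0)*(a 2)*(b 2)^2*(c 1) + 1*(a 0)*(a 2)*(b 1)*(b 2)*(c 2) + (-1)*(a 0)*(a 2)*(b 0)*(b 1)*(c 0) +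 1*(a 0)*(a 2)*(b 0)^2*(c 1) + 1*(a 0)*(a 2)*(e 2)*(b 2)*(c 1) + (-1)*(a 0)*(a 2)*(e 2)*(b 1)*(b 2) + (-1)*(a 0)*(a 2)*(e 1)*(b 2)*(c 2) + 1*(a 0)*(a 2)*(e 1)*(b 2)^2 + 1*(a 0)*(a 2)*(e 1)*(b 0)*(c 0) + (-1)*(a 0)*(a 2)*(e 1)*(b 0)^2 + (-1)*(a 0)*(a 2)*(e 0)*(b 0)*(c 1) + 1*(a 0)*(a 2)*(e 0)*(b 0)*(b 1) + (-1)*(a 0)*(a 1)*(b 1)*(b 2)*(c 1) + 1*(a 0)*(a 1)*(b 1)^2*(c 2) + 1*(a 0)*(a 1)*(b 0)*(b 2)*(c 0) + (-1)*(a 0)*(a 1)*(b 0)^2*(c 2) + 1*(a 0)*(a 1)*(e 2)*(b 1)*(c 1) + (-1)*(a 0)*(a 1)*(e 2)*(b 1)^2 + (-1)*(a 0)*(a 1)*(e 2)*(b 0)*(c 0) + 1*(a 0)*(a 1)*(e 2)*(b 0)^2 + (-1)*(a 0)*(a 1)*(e 1)*(b 1)*(c 2) + 1*(a 0)*(a 1)*(e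 1)*(b 1)*(b 2) + 1*(a 0)*(a 1)*(e 0)*(b 0)*(c 2) + (-1)*(a 0)*(a 1)*(e 0)*(b 0)*(b 2) + (-1)*(a 0)^2*(b 0)*(b 2)*(c 1) + 1*(a 0)^2*(b 0)*(b 1)*(c 2) + 1*(a 0)^2*(e 2)*(b 0)*(c 1) + (-1)*(a 0)^2*(e 2)*(b 0)*(b 1) + (-1)*(a 0)^2*(e 1)*(b 0)*(c 2) + 1*(a 0)^2*(e 1)*(b 0)*(b 2) + (-1)*(e 2)*(b 0)*(c 1) + 1*(e 1)*(b 0)*(c 2) + (-1)*(a 2)*(b 1)*(c 0) + 1*(a 2)*(b 0)*(c 1) + 1*(a 2)*(e 1)*(c 0) + (-1)*(a 2)*(e 1)*(b 0) + (-1)*(a 2)*(e 0)*(c 1) + 1*(a 2)*(e 0)*(b 1) + 1*(a 1)*(b 2)*(c 0) + (-1)*(a 1)*(b 0)*(c 2) + (-1)*(a 1)*(e 2)*(c 0) + 1*(a 1)*(e 2)*(b 0) + 1*(a 1)*(e 0)*(c 2) + (-1)*(a 1)*(e 0)*(b 2) + (-1)*(a 0)*(b 2)*(c 1) + 1*(a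 0)*(b 1)*(c 2) + 1*(a 0)*(e 2)*(c 1) + (-1)*(a 0)*(e 2)*(b 1) + (-1)*(a 0)*(e 1)*(c 2) + 1*(a 0)*(e 1)*(b 2)) * ha + ((-1)*(a 2)^2*(e 2)*(b 0)*(c 1) + 1*(a 2)^2*(e 1)*(b 2)*(c 0) + 1*(a 2)^2*(e 1)*(b 0)*(c 2) + (-1)*(a 2)^2*(e 0)*(b 2)*(c 1) + (-1)*(a 1)*(a 2)*(e 2)*(b 2)*(c 0) + 1*(a 1)*(a 2)*(e 1)*(b 1)*(c 0) + 1*(a 1)*(a 2)*(e 0)*(b 2)*(c 2) + (-1)*(a 1)*(a 2)*(e 0)*(b 1)*(c 1) + (-1)*(a 1)^2*(e 2)*(b 1)*(c 0) + (-1)*(a 1)^2*(e 2)*(b 0)*(c 1) + 1*(a 1)^2*(e 1)*(b 0)*(c 2) + 1*(a 1)^2*(e 0)*(b 1)*(c 2) + 1*(a 0)*(a 2)*(e 2)*(b 2)*(c 1) + (-1)*(a 0)*(a 2)*(e 1)*(b 2)*(c 2) + 1*(a 0)*(a 2)*(e 1)*(b 0)*(c 0) + (-1)*(a 0)*(a 2)*(e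 0)*(b 0)*(c 1) + 1*(a 0)*(a 1)*(e 2)*(b 1)*(c 1) + (-1)*(a 0)*(a 1)*(e 2)*(b 0)*(c 0) + (-1)*(a 0)*(a 1)*(e 1)*(b 1)*(c 2) + 1*(a 0)*(a 1)*(e 0)*(b 0)*(c 2) + 1*(e 2)*(b 0)*(c 1) + (-1)*(e 1)*(b 0)*(c 2) + (-1)*(a 2)*(e 1)*(c 0) + 1*(a 2)*(e 0)*(c 1) + 1*(a 1)*(e 2)*(c 0) + (-1)*(a 1)*(e 0)*(c 2) + (-1)*(a 0)*(e 2)*(c 1) + 1*(a 0)*(e 1)*(c 2)) * hb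

lemma poly_main (D su sv sw u v w : ℝ) (hD2 : D^2 = 1 - u^2 - v^2 - w^2 + 2*u*v*w)
    (hsu : su^2 = 1 - u^2) (hsv : sv^2 = 1 - v^2) (hsw : sw^2 = 1 - w^2) :
    D * (D * ((su*sw + v - u*w)*(sv*sw + u - v*w) + (su*sv + w - u*v)*(sv*sw + u - v*w)
        - (su*sv + w - u*v)*(su*sw + v - u*w)) + D^3)
      = (1 + u - v - w) * ((su*sv + w - u*v)*(su*sw + v - u*w)*(sv*sw + u - v*w)
        + D^2*((su*sv + w - u*v) + (su*sw + v - u*w) - (sv*sw + u - v*w))) := by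
  linear_combination ((1/2:ℝ)*u*v*w^2 + 1*u*v^2*w + (-1)*u^2*v*w + (-1/2:ℝ)*sw^2*u*v + (-1)*sv*sw*u*w + (-1)*sv*sw*u*v + (1/2:ℝ)*sv*sw*u^2 + (-1)*su*sw*v*w + (-1/2:ℝ)*su*sw*v^2 + 1*su*sw*u*v + (-1/2:ℝ)*su*sv*w^2 + (-1)*su*sv*v*w + 1*su*sv*u*w + (1/2:ℝ)*su*sv*sw^2 + (1/2:ℝ)*su*sv^2*sw + (-1/2:ℝ)*su^2*sv*sw + (-1/4:ℝ)*w^3 + (-1)*u*v*w + (-1/4:ℝ)*sw^2*w + 1*sv*sw*u + 1*su*sw*v + 1*su*sv*w + (1/2:ℝ)*u*v + (1/2:ℝ)*sv*sw + (-1/2:ℝ)*su*sw + (-1/2:ℝ)*su*sv + 1*D^2 + (-3/4:ℝ)*w + (-1)*v + 1*u + 1) * hD2 + ((-1)*sv*sw*v*w^2 + (-1)*sv*sw*v^2*w + 1*sv^2*sw^2*w + 1*sv^2*sw^2*v + (-1)*sv^2*sw^2*u + (1/2:ℝ)*sv*sw*w^2 + 1*sv*sw*v*w + (1/2:ℝ)*sv*sw*v^2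 + 1*sv*sw*u*w + 1*sv*sw*u*v + (-1/2:ℝ)*sv*sw*u^2 + (-1)*sv^2*sw^2 + (-1/2:ℝ)*D^2*sv*sw + (-1)*sv*sw*u + (-1/2:ℝ)*sv*sw) * hsu + ((-1)*sw^2*u^2*w + (-1)*sw^2*u^2*v + 1*sw^2*u^3 + (-1)*su*sw*u*w^2 + 1*su*sw*u^2*w + 1*sw^2*u^2 + (-1/2:ℝ)*su*sw*w^2 + 1*su*sw*v*w + (1/2:ℝ)*su*sw*v^2 + 1*su*sw*u*w + (-1)*su*sw*u*v + (-1/2:ℝ)*su*sw*u^2 + (1/2:ℝ)*D^2*su*sw + 1*sw^2*w + 1*sw^2*v + (-1)*sw^2*u + (-1)*su*sw*v + (-1)*sw^2 + (1/2:ℝ)*su*sw) * hsv + (1*u^2*v^3 + (-1)*u^3*v^2 + (-1)*su*sv*u*v^2 + 1*su*sv*u^2*v + (1/2:ℝ)*u*v^3 + (-1)*u^2*v^2 + (1/2:ℝ)*u^3*v + (1/2:ℝ)*su*sv*w^2 + 1*su*sv*v*w + (-1/2:ℝ)*su*sv*v^2 + (-1)*su*sv*u*w + 1*su*sv*u*v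 + (-1/2:ℝ)*su*sv*u^2 + (1/2:ℝ)*D^2*u*v + (1/2:ℝ)*D^2*su*sv + (1/4:ℝ)*w^3 + (-3/4:ℝ)*v^2*w + (-1)*v^3 + 1*u*v^2 + (-3/4:ℝ)*u^2*w + (-1)*u^2*v + 1*u^3 + (-1)*su*sv*w + (1/4:ℝ)*D^2*w + 1*v^2 + (-1/2:ℝ)*u*v + 1*u^2 + (1/2:ℝ)*su*sv + (3/4:ℝ)*w + 1*v + (-1)*u + (-1)) * hsw


lemma half_of_arccos (e s D : ℝ) (hs : 0 < s) (hD : 0 < D)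
    (hfac : (s - e) * (s + e) = D ^ 2) :
    Real.sin (Real.arccos (e / s) / 2) = (D / (s + e)) * Real.cos (Real.arccos (e / s) / 2)
      ∧ 0 < Real.cos (Real.arccos (e / s) / 2) ∧ 0 < s + e := by
  have hDsq : 0 < D ^ 2 := pow_pos hD 2
  have he2 : e ^ 2 < s ^ 2 := by nlinarith
  have hP : 0 < s + e := by
    rcases le_or_gt (s + e) 0 with h | h
    · exfalso; nlinarith
    · exact h
  have hq2 : (e / s) ^ 2 < 1 := by
    rw [div_pow, div_lt_one (by positivity)]; exact he2
  have hqlo : -1 ≤ e / s := by nlinarith [sq_nonneg (e / s + 1)]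
  have hqhi : e / s ≤ 1 := by nlinarith [sq_nonneg (e / s - 1)]
  have hcos : Real.cos (Real.arccos (e / s)) = e / s := Real.cos_arccos hqlo hqhi
  have hA0 : 0 ≤ Real.arccos (e / s) := Real.arccos_nonneg _
  have hAπ : Real.arccos (e / s) < Real.pi := by
    rcases lt_or_eq_of_le (Real.arccos_le_pi (e / s)) with h | h
    · exact h
    · exfalso; have hcp := Real.cos_pi; rw [← h, hcos] at hcp; nlinarith
  have hc2 : 0 < Real.cos (Real.arccos (e / s) / 2) := by
    apply Real.cos_pos_of_mem_Ioo
    constructor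
    · have := Real.pi_pos; linarith
    · linarith
  have hcsq : Real.cos (Real.arccos (e / s) / 2) ^ 2 = (1 + e / s) / 2 := by
    have h2 := Real.cos_sq (Real.arccos (e / s) / 2)
    rw [show 2 * (Real.arccos (e / s) / 2) = Real.arccos (e / s) by ring, hcos] at h2
    linarith
  have hssq : Real.sin (Real.arccos (e / s) / 2) ^ 2 = (1 - e / s) / 2 := by
    have h2 := Real.sin_sq (Real.arccos (e / s) / 2)
    rw [hcsq] at h2; linarith
  refine ⟨?_, hc2, hP⟩
  have hl : 0 ≤ Real.sin (Real.arccos (e / s) / 2) :=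
    Real.sin_nonneg_of_nonneg_of_le_pi (by linarith) (by linarith)
  have hr : 0 ≤ (D / (s + e)) * Real.cos (Real.arccos (e / s) / 2) :=
    mul_nonneg (div_nonneg hD.le hP.le) hc2.le
  have hsq : Real.sin (Real.arccos (e / s) / 2) ^ 2
      = ((D / (s + e)) * Real.cos (Real.arccos (e / s) / 2)) ^ 2 := by
    rw [hssq, mul_pow, hcsq, div_pow]
    field_simp
    linear_combination hfac
  calc Real.sin (Real.arccos (e / s) / 2)
      = Real.sqrt (Real.sin (Real.arccos (e / s) / 2) ^ 2) := (Real.sqrt_sq hl).symm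
    _ = Real.sqrt (((D / (s + e)) * Real.cos (Real.arccos (e / s) / 2)) ^ 2) := by rw [hsq]
    _ = (D / (s + e)) * Real.cos (Real.arccos (e / s) / 2) := Real.sqrt_sq hr

lemma sphTan (a b c : Fin 3 → ℝ) (ha : dot3 a a = 1) (hb : dot3 b b = 1) (hc : dot3 c c = 1)
    (hD : 0 < det3 a b c) :
    Real.tan ((sphAngle a b c + sphAngle b c a - sphAngle c a b) / 2)
      = (1 + dot3 a b - dot3 a c - dot3 b c) / det3 a b c := by
  obtain ⟨u, hu⟩ : ∃ x, dot3 a b = x := ⟨_, rfl⟩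
  obtain ⟨v, hv⟩ : ∃ x, dot3 a c = x := ⟨_, rfl⟩
  obtain ⟨w, hw⟩ : ∃ x, dot3 b c = x := ⟨_, rfl⟩
  obtain ⟨D, hDe⟩ : ∃ x, det3 a b c = x := ⟨_, rfl⟩
  rw [hDe] at hD
  rw [hu, hv, hw, hDe]
  have hu' : dot3 b a = u := by rw [dot3_comm]; exact hu
  have hv' : dot3 c a = v := by rw [dot3_comm]; exact hv
  have hw' : dot3 c b = w := by rw [dot3_comm]; exact hw
  have hDne : D ≠ 0 := ne_of_gt hD
  have hD2 : D ^ 2 = 1 - u ^ 2 - v ^ 2 - w ^ 2 + 2 * u * v * w := by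
    rw [← hu, ← hv, ← hw, ← hDe]; exact det3_sq a b c ha hb hc
  have hDsq : 0 < D ^ 2 := pow_pos hD 2
  have h1u : 0 ≤ 1 - u ^ 2 := by
    have h := dot3_self_nonneg (b - u • a); rw [proj_self a b u ha hu, hb] at h; linarith
  have h1v : 0 ≤ 1 - v ^ 2 := by
    have h := dot3_self_nonneg (c - v • a); rw [proj_self a c v ha hv, hc] at h; linarith
  have h1w : 0 ≤ 1 - w ^ 2 := by
    have h := dot3_self_nonneg (c - w • b); rw [proj_self b c w hb hw, hc] at h; linarith
  have hpuv : (1 - u ^ 2) * (1 - v ^ 2) = D ^ 2 + (w - u * v) ^ 2 := by linear_combination -hD2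
  have hpuw : (1 - u ^ 2) * (1 - w ^ 2) = D ^ 2 + (v - u * w) ^ 2 := by linear_combination -hD2
  have hpvw : (1 - v ^ 2) * (1 - w ^ 2) = D ^ 2 + (u - v * w) ^ 2 := by linear_combination -hD2
  have h1u' : 0 < 1 - u ^ 2 := by nlinarith [sq_nonneg (w - u * v)]
  have h1v' : 0 < 1 - v ^ 2 := by nlinarith [sq_nonneg (w - u * v)]
  have h1w' : 0 < 1 - w ^ 2 := by nlinarith [sq_nonneg (v - u * w)]
  set su := Real.sqrt (1 - u ^ 2) with hsud
  set sv := Real.sqrt (1 - v ^ 2) with hsvd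
  set sw := Real.sqrt (1 - w ^ 2) with hswd
  have hsu : su ^ 2 = 1 - u ^ 2 := Real.sq_sqrt h1u
  have hsv : sv ^ 2 = 1 - v ^ 2 := Real.sq_sqrt h1v
  have hsw : sw ^ 2 = 1 - w ^ 2 := Real.sq_sqrt h1w
  have hsup : 0 < su := Real.sqrt_pos.mpr h1u'
  have hsvp : 0 < sv := Real.sqrt_pos.mpr h1v'
  have hswp : 0 < sw := Real.sqrt_pos.mpr h1w'
  have hfA : (su * sv - (w - u * v)) * (su * sv + (w - u * v)) = D ^ 2 := by
    linear_combination sv ^ 2 * hsu + (1 - u ^ 2) * hsv + hpuv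
  have hfB : (su * sw - (v - u * w)) * (su * sw + (v - u * w)) = D ^ 2 := by
    linear_combination sw ^ 2 * hsu + (1 - u ^ 2) * hsw + hpuw
  have hfC : (sv * sw - (u - v * w)) * (sv * sw + (u - v * w)) = D ^ 2 := by
    linear_combination sw ^ 2 * hsv + (1 - v ^ 2) * hsw + hpvw
  -- norms of projections
  have hnb : norm3 (b - u • a) = su := by
    rw [norm3, proj_self a b u ha hu, hb]
  have hnc : norm3 (c - v • a) = sv := by
    rw [norm3, proj_self a c v ha hv, hc]
  have hnc' : norm3 (c - w • b) = sw := by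
    rw [norm3, proj_self b c w hb hw, hc]
  have hna : norm3 (a - u • b) = su := by
    rw [norm3, proj_self b a u hb hu', ha]
  have hna' : norm3 (a - v • c) = sv := by
    rw [norm3, proj_self c a v hc hv', ha]
  have hnb' : norm3 (b - w • c) = sw := by
    rw [norm3, proj_self c b w hc hw', hb]
  -- the three angles as arccos
  have hA : sphAngle a b c = Real.arccos ((w - u * v) / (su * sv)) := by
    simp only [sphAngle]
    rw [hu, hv, proj_dot a b c u v ha hu hv, hw, hnb, hnc]
  have hB : sphAngle b c a = Real.arccos ((v - w * u) / (sw * su)) := by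
    simp only [sphAngle]
    rw [hw, hu', proj_dot b c a w u hb hw hu', hv', hnc', hna]
  have hC : sphAngle c a b = Real.arccos ((u - v * w) / (sv * sw)) := by
    simp only [sphAngle]
    rw [hv', hw', proj_dot c a b v w hc hv' hw', hu, hna', hnb']
  have hfB' : (sw * su - (v - w * u)) * (sw * su + (v - w * u)) = D ^ 2 := by
    linear_combination hfB
  obtain ⟨hsinA, hcA, hPA⟩ :=
    half_of_arccos (w - u * v) (su * sv) D (mul_pos hsup hsvp) hD hfA
  obtain ⟨hsinB, hcB, hPB⟩ :=
    half_of_arccos (v - w * u) (sw * su) D (mul_pos hswp hsup) hD hfB'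
  obtain ⟨hsinC, hcC, hPC⟩ :=
    half_of_arccos (u - v * w) (sv * sw) D (mul_pos hsvp hswp) hD hfC
  rw [← hA] at hsinA hcA
  rw [← hB] at hsinB hcB
  rw [← hC] at hsinC hcC
  have harg : (sphAngle a b c + sphAngle b c a - sphAngle c a b) / 2
      = sphAngle a b c / 2 + sphAngle b c a / 2 - sphAngle c a b / 2 := by ring
  rw [harg, Real.tan_eq_sin_div_cos]
  have hPAne : su * sv + (w - u * v) ≠ 0 := ne_of_gt hPA
  have hPBne : sw * su + (v - w * u) ≠ 0 := ne_of_gt hPB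
  have hPCne : sv * sw + (u - v * w) ≠ 0 := ne_of_gt hPC
  have key := poly_main D su sv sw u v w hD2 hsu hsv hsw
  set PA := su * sv + (w - u * v) with hPAd
  set PB := sw * su + (v - w * u) with hPBd
  set PC := sv * sw + (u - v * w) with hPCd
  have hPAne : PA ≠ 0 := ne_of_gt hPA
  have hPBne : PB ≠ 0 := ne_of_gt hPB
  have hPCne : PC ≠ 0 := ne_of_gt hPC
  have hP3 : PA * (PB * PC) ≠ 0 := by
    exact mul_ne_zero hPAne (mul_ne_zero hPBne hPCne)
  have c1 : D / PA * PA = D := div_mul_cancel₀ D hPAne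
  have c2 : D / PB * PB = D := div_mul_cancel₀ D hPBne
  have c3 : D / PC * PC = D := div_mul_cancel₀ D hPCne
  have e1 : (D / PA + D / PB - D / PC + D / PA * (D / PB) * (D / PC)) * (PA * (PB * PC))
      = D * (PB * PC) + D * (PA * PC) - D * (PA * PB) + D ^ 3 := by
    linear_combination (PB * PC + (D / PB) * (D / PC) * PB * PC) * c1
      + (PA * PC + D * (D / PC) * PC) * c2 + (D ^ 2 - PA * PB) * c3
  have e2 : (1 - D / PA * (D / PB) + D / PA * (D / PC) + D / PB * (D / PC)) * (PA * (PB * PC))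
      = PA * (PB * PC) + D ^ 2 * PA + D ^ 2 * PB - D ^ 2 * PC := by
    linear_combination (-(D / PB) * PB * PC + (D / PC) * PB * PC) * c1
      + (-D * PC + (D / PC) * PA * PC) * c2 + (D * PB + D * PA) * c3
  have hNQ : D / PA + D / PB - D / PC + D / PA * (D / PB) * (D / PC)
      = ((1 + u - v - w) / D)
        * (1 - D / PA * (D / PB) + D / PA * (D / PC) + D / PB * (D / PC)) := by
    refine mul_right_cancel₀ hP3 ?_
    rw [mul_assoc ((1 + u - v - w) / D), e1, e2]
    rw [div_mul_eq_mul_div, eq_div_iff hDne]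
    linear_combination key
  have hEq : Real.sin (sphAngle a b c / 2 + sphAngle b c a / 2 - sphAngle c a b / 2)
      = ((1 + u - v - w) / D)
        * Real.cos (sphAngle a b c / 2 + sphAngle b c a / 2 - sphAngle c a b / 2) := by
    rw [Real.sin_sub, Real.cos_sub, Real.sin_add, Real.cos_add, hsinA, hsinB, hsinC]
    linear_combination (Real.cos (sphAngle a b c / 2) * Real.cos (sphAngle b c a / 2)
      * Real.cos (sphAngle c a b / 2)) * hNQ
  have hcne : Real.cos (sphAngle a b c / 2 + sphAngle b c a / 2 - sphAngle c a b / 2) ≠ 0 := by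
    intro h0
    have hpyth := Real.sin_sq_add_cos_sq
      (sphAngle a b c / 2 + sphAngle b c a / 2 - sphAngle c a b / 2)
    rw [h0, hEq, h0] at hpyth
    norm_num at hpyth
  rw [hEq, mul_div_assoc, div_self hcne, mul_one]


/-- Lemma 2.2, last part (vertex-star form): the algebraic area of the dual polygon
`(n_j)` equals the vertex weight `d₀`. -/
theorem sph_vertex_weight_is_dual_area
    (m : ℕ) (hm : 3 ≤ m) [NeZero m]
    (p0 : Fin 3 → ℝ) (p : ZMod m → Fin 3 → ℝ)
    (hp0 : norm3 p0 = 1) (hp : ∀ j, norm3 (p j) = 1)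
    (hdet : ∀ j : ZMod m, 0 < det3 p0 (p j) (p (j+1)))
    (n : ZMod m → Fin 3 → ℝ)
    (hn0 : ∀ j : ZMod m, dot3 (n j) p0 = 1)
    (hn1 : ∀ j : ZMod m, dot3 (n j) (p j) = 1)
    (hn2 : ∀ j : ZMod m, dot3 (n j) (p (j+1)) = 1) :
    (1 / 2) * ∑ j : ZMod m, det3 p0 (n (j-1)) (n j) = sphStarVertexWeight m p0 p := by
  have hda : dot3 p0 p0 = 1 := unit_dot hp0
  have hdp : ∀ j, dot3 (p j) (p j) = 1 := fun j => unit_dot (hp j)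
  have hn : ∀ k : ZMod m, n k = (det3 p0 (p k) (p (k+1)))⁻¹ •
      (cross3 (p k) (p (k+1)) + cross3 (p (k+1)) p0 + cross3 p0 (p k)) := by
    intro k
    have hDk : det3 p0 (p k) (p (k+1)) ≠ 0 := ne_of_gt (hdet k)
    funext i
    have h1 := det3_cramer p0 (p k) (p (k+1)) (n k) i
    have h2 := det3_cramer p0 (p k) (p (k+1))
      ((det3 p0 (p k) (p (k+1)))⁻¹ •
        (cross3 (p k) (p (k+1)) + cross3 (p (k+1)) p0 + cross3 p0 (p k))) i
    rw [hn0 k, hn1 k, hn2 k] at h1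
    rw [dot3_smul_left, dot3_smul_left, dot3_smul_left, dotN_a, dotN_b, dotN_c,
      inv_mul_cancel₀ hDk] at h2
    exact mul_left_cancel₀ hDk (h1.trans h2.symm)
  rw [sphStarVertexWeight, Finset.mul_sum]
  refine Finset.sum_congr rfl ?_
  intro j _
  have hj1 : j - 1 + 1 = j := by ring
  have hD1 : 0 < det3 p0 (p (j-1)) (p j) := by have h := hdet (j-1); rwa [hj1] at h
  have hD2' : 0 < det3 p0 (p j) (p (j+1)) := hdet j
  have hne1 : det3 p0 (p (j-1)) (p j) ≠ 0 := ne_of_gt hD1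
  have hne2 : det3 p0 (p j) (p (j+1)) ≠ 0 := ne_of_gt hD2'
  -- bounds on u := dot3 p0 (p j)
  have hΓ := det3_sq p0 (p j) (p (j+1)) hda (hdp j) (hdp (j+1))
  have h1u : 0 ≤ 1 - dot3 p0 (p j) ^ 2 := by
    have h := dot3_self_nonneg (p j - dot3 p0 (p j) • p0)
    rw [proj_self p0 (p j) (dot3 p0 (p j)) hda rfl, hdp j] at h; linarith
  have h1v : 0 ≤ 1 - dot3 p0 (p (j+1)) ^ 2 := by
    have h := dot3_self_nonneg (p (j+1) - dot3 p0 (p (j+1)) • p0)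
    rw [proj_self p0 (p (j+1)) (dot3 p0 (p (j+1))) hda rfl, hdp (j+1)] at h; linarith
  have hpuv : (1 - dot3 p0 (p j) ^ 2) * (1 - dot3 p0 (p (j+1)) ^ 2)
      = det3 p0 (p j) (p (j+1)) ^ 2
        + (dot3 (p j) (p (j+1)) - dot3 p0 (p j) * dot3 p0 (p (j+1))) ^ 2 := by
    linear_combination -hΓ
  have h1u' : 0 < 1 - dot3 p0 (p j) ^ 2 := by
    nlinarith [sq_nonneg (dot3 (p j) (p (j+1)) - dot3 p0 (p j) * dot3 p0 (p (j+1))),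
      pow_pos hD2' 2]
  have hlo : -1 ≤ dot3 p0 (p j) := by nlinarith
  have hhi : dot3 p0 (p j) ≤ 1 := by nlinarith
  have h1pu : 0 < 1 + dot3 p0 (p j) := by nlinarith
  have h1pune : (1 : ℝ) + dot3 p0 (p j) ≠ 0 := ne_of_gt h1pu
  -- trig rewrites
  have ht1 := sphTan p0 (p j) (p (j+1)) hda (hdp j) (hdp (j+1)) hD2'
  have hcyc : det3 (p j) p0 (p (j-1)) = det3 p0 (p (j-1)) (p j) := by
    simp [det3, dot3, cross3]; ring
  have hD1'' : 0 < det3 (p j) p0 (p (j-1)) := by rwa [hcyc]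
  have ht2 := sphTan (p j) p0 (p (j-1)) (hdp j) hda (hdp (j-1)) hD1''
  rw [hcyc, dot3_comm (p j) p0, dot3_comm (p j) (p (j-1))] at ht2
  -- half-angle values
  have hc2 : Real.cos (Real.arccos (dot3 p0 (p j)) / 2) ^ 2 = (1 + dot3 p0 (p j)) / 2 := by
    have h2 := Real.cos_sq (Real.arccos (dot3 p0 (p j)) / 2)
    rw [show 2 * (Real.arccos (dot3 p0 (p j)) / 2) = Real.arccos (dot3 p0 (p j)) by ring,
      Real.cos_arccos hlo hhi] at h2
    linarith
  have hs2 : Real.sin (Real.arccos (dot3 p0 (p j)) / 2) ^ 2 = (1 - dot3 p0 (p j)) / 2 := by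
    have h2 := Real.sin_sq (Real.arccos (dot3 p0 (p j)) / 2)
    rw [hc2] at h2; linarith
  have key := key_det p0 (p (j-1)) (p j) (p (j+1)) hda (hdp (j-1)) (hdp j) (hdp (j+1))
  rw [sphStarWeight, hs2, hc2, ht1,
    add_comm (sphAngle p0 (p (j-1)) (p j)) (sphAngle (p j) p0 (p (j-1))), ht2,
    hn (j-1), hn j, hj1, det3_smul₂, det3_smul₃]
  field_simp
  linear_combination key
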